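/- If the equation x'(t) = L(t)x_t is shadowable, then for all t ≥ s ≥ 0 the phase space decomposes as the algebraic sum C = T(t,s)C + 𝒮(t), where 𝒮(t) is the stable subspace at time t. -/

import Mathlib

open Set

noncomputable section

/-- The Euclidean state space ℝ^d. -/
abbrev Rd (d : ℕ) : Type := EuclideanSpace ℝ (Fin d)

/-- The phase space C = C([-r,0], ℝ^d) with the supremum norm. -/
abbrev Ph (d : ℕ) (r : ℝ) : Type := C(Set.Icc (-r) (0:ℝ), Rd d)

/-- The segment x_t ∈ C of a continuous function x : ℝ → ℝ^d, x_t(θ) = x(t+θ). -/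
def seg (d : ℕ) (r : ℝ) (x : ℝ → Rd d) (hx : Continuous x) (t : ℝ) : Ph d r :=
  ⟨fun θ => x (t + θ.1), hx.comp (continuous_const.add continuous_subtype_val)⟩

/-- `x` is a solution of x'(t) = L(t)x_t on [s, ∞) (right-hand derivative at s). -/
def IsSol (d : ℕ) (r : ℝ) (L : ℝ → (Ph d r →L[ℝ] Rd d)) (s : ℝ)
    (x : ℝ → Rd d) (hx : Continuous x) : Prop :=
  ∀ t, s ≤ t → HasDerivWithinAt x (L t (seg d r x hx t)) (Set.Ici s) t

/-- `T` is the solution operator family of x'(t) = L(t)x_t :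
for every s ≥ 0 and φ ∈ C there is a solution x on [s,∞) with x_s = φ and x_t = T(t,s)φ. -/
def IsSolOp (d : ℕ) (r : ℝ) (L : ℝ → (Ph d r →L[ℝ] Rd d))
    (T : ℝ → ℝ → (Ph d r →L[ℝ] Ph d r)) : Prop :=
  ∀ s, 0 ≤ s → ∀ φ : Ph d r, ∃ (x : ℝ → Rd d) (hx : Continuous x),
    IsSol d r L s x hx ∧ seg d r x hx s = φ ∧ ∀ t, s ≤ t → seg d r x hx t = T t s φ

/-- The evolution family property of the solution operators. -/
def Cocycle (d : ℕ) (r : ℝ) (T : ℝ → ℝ → (Ph d r →L[ℝ] Ph d r)) : Prop :=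
  (∀ s, 0 ≤ s → T s s = ContinuousLinearMap.id ℝ (Ph d r)) ∧
  ∀ τ t s, 0 ≤ s → s ≤ t → t ≤ τ → T τ s = (T τ t).comp (T t s)

/-- Uniqueness of solutions with a given initial segment at time s. -/
def UniqueSol (d : ℕ) (r : ℝ) (L : ℝ → (Ph d r →L[ℝ] Rd d)) : Prop :=
  ∀ s, 0 ≤ s → ∀ (x y : ℝ → Rd d) (hx : Continuous x) (hy : Continuous y),
    IsSol d r L s x hx → IsSol d r L s y hy → seg d r x hx s = seg d r y hy s →
    ∀ t, s - r ≤ t → x t = y t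

/-- Eq. x'(t) = L(t)x_t is shadowable. -/
def Shadowable (d : ℕ) (r : ℝ) (L : ℝ → (Ph d r →L[ℝ] Rd d)) : Prop :=
  ∀ ε, 0 < ε → ∃ δ, 0 < δ ∧ ∀ (y yd : ℝ → Rd d) (hy : Continuous y),
    ContinuousOn yd (Set.Ici 0) →
    (∀ t, 0 ≤ t → HasDerivWithinAt y (yd t) (Set.Ici 0) t) →
    (∀ t, 0 ≤ t → ‖yd t - L t (seg d r y hy t)‖ ≤ δ) →
    ∃ (x : ℝ → Rd d) (hx : Continuous x), IsSol d r L 0 x hx ∧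
      ∀ t, 0 ≤ t → ‖seg d r x hx t - seg d r y hy t‖ ≤ ε

/-- Eq. x'(t) = L(t)x_t is Hyers–Ulam stable. -/
def HyersUlam (d : ℕ) (r : ℝ) (L : ℝ → (Ph d r →L[ℝ] Rd d)) : Prop :=
  ∃ κ, 0 < κ ∧ ∀ δ, 0 < δ → ∀ (y yd : ℝ → Rd d) (hy : Continuous y),
    ContinuousOn yd (Set.Ici 0) →
    (∀ t, 0 ≤ t → HasDerivWithinAt y (yd t) (Set.Ici 0) t) →
    (∀ t, 0 ≤ t → ‖yd t - L t (seg d r y hy t)‖ ≤ δ) →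
    ∃ (x : ℝ → Rd d) (hx : Continuous x), IsSol d r L 0 x hx ∧
      ∀ t, 0 ≤ t → ‖seg d r x hx t - seg d r y hy t‖ ≤ κ * δ

/-- The stable subspace 𝒮(s) = {φ ∈ C : sup_{t ≥ s} ‖T(t,s)φ‖ < ∞}. -/
def stableSub (d : ℕ) (r : ℝ) (T : ℝ → ℝ → (Ph d r →L[ℝ] Ph d r)) (s : ℝ) :
    Submodule ℝ (Ph d r) where
  carrier := {φ | ∃ M, ∀ t, s ≤ t → ‖T t s φ‖ ≤ M}
  add_mem' := by
    rintro a b ⟨Ma, hMa⟩ ⟨Mb, hMb⟩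
    refine ⟨Ma + Mb, fun t ht => ?_⟩
    calc ‖T t s (a + b)‖ = ‖T t s a + T t s b‖ := by rw [map_add]
    _ ≤ ‖T t s a‖ + ‖T t s b‖ := norm_add_le _ _
    _ ≤ Ma + Mb := add_le_add (hMa t ht) (hMb t ht)
  zero_mem' := ⟨0, fun t ht => by simp⟩
  smul_mem' := by
    rintro c a ⟨Ma, hMa⟩
    refine ⟨‖c‖ * Ma, fun t ht => ?_⟩
    rw [map_smul]
    have h1 : ‖c • (T t s) a‖ = ‖c‖ * ‖(T t s) a‖ := @norm_smul ℝ (Ph d r) _ _ _ _ c _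
    rw [h1]
    exact mul_le_mul_of_nonneg_left (hMa t ht) (norm_nonneg c)

/-- Eq. x'(t) = L(t)x_t admits an exponential dichotomy (with solution operators T). -/
def ExpDich (d : ℕ) (r : ℝ) (T : ℝ → ℝ → (Ph d r →L[ℝ] Ph d r)) : Prop :=
  ∃ (P : ℝ → (Ph d r →L[ℝ] Ph d r)) (D lam : ℝ), 0 < D ∧ 0 < lam ∧
    (∀ t, 0 ≤ t → (P t).comp (P t) = P t) ∧
    (∀ t s, 0 ≤ s → s ≤ t → (P t).comp (T t s) = (T t s).comp (P s)) ∧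
    (∀ t s, 0 ≤ s → s ≤ t →
      Set.BijOn (⇑(T t s)) (LinearMap.ker (P s : Ph d r →ₗ[ℝ] Ph d r) : Set (Ph d r))
        (LinearMap.ker (P t : Ph d r →ₗ[ℝ] Ph d r) : Set (Ph d r))) ∧
    (∀ t s, 0 ≤ s → s ≤ t → ‖(T t s).comp (P s)‖ ≤ D * Real.exp (-lam * (t - s))) ∧
    (∀ t s, 0 ≤ t → t ≤ s → ∀ φ ∈ LinearMap.ker (P t : Ph d r →ₗ[ℝ] Ph d r),
      ‖φ‖ ≤ D * Real.exp (-lam * (s - t)) * ‖T s t φ‖)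

lemma seg_continuous (d : ℕ) (r : ℝ) (x : ℝ → Rd d) (hx : Continuous x) :
    Continuous (fun t => seg d r x hx t) := by
  have : (fun t => seg d r x hx t) =
      ⇑(ContinuousMap.curry ⟨fun p : ℝ × (Set.Icc (-r) (0:ℝ)) => x (p.1 + p.2.1),
        hx.comp (continuous_fst.add (continuous_subtype_val.comp continuous_snd))⟩) := by
    ext t θ; rfl
  rw [this]; exact ContinuousMap.continuous _

lemma seg_smul (d : ℕ) (r : ℝ) (x : ℝ → Rd d) (hx : Continuous x) (c : ℝ)
    (hcx : Continuous (fun τ => c • x τ)) (t : ℝ) :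
    seg d r (fun τ => c • x τ) hcx t = c • seg d r x hx t := by
  ext θ; rfl

lemma seg_norm_le (d : ℕ) (r : ℝ) (x : ℝ → Rd d) (hx : Continuous x) (t M : ℝ)
    (hM : 0 ≤ M) (h : ∀ θ ∈ Icc (t - r) t, ‖x θ‖ ≤ M) : ‖seg d r x hx t‖ ≤ M := by
  rw [ContinuousMap.norm_le _ hM]
  intro θ
  exact h (t + θ.1) ⟨by linarith [θ.2.1], by linarith [θ.2.2]⟩

lemma seg_eq_of_eqOn (d : ℕ) (r : ℝ) (x y : ℝ → Rd d) (hx : Continuous x)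
    (hy : Continuous y) (t : ℝ) (h : ∀ θ ∈ Icc (t - r) t, x θ = y θ) :
    seg d r x hx t = seg d r y hy t := by
  apply ContinuousMap.ext; intro θ
  exact h (t + θ.1) ⟨by linarith [θ.2.1], by linarith [θ.2.2]⟩

lemma segL_continuousOn (d : ℕ) (r : ℝ) (L : ℝ → (Ph d r →L[ℝ] Rd d))
    (hL : ContinuousOn L (Set.Ici 0)) (x : ℝ → Rd d) (hx : Continuous x) :
    ContinuousOn (fun τ => L τ (seg d r x hx τ)) (Set.Ici 0) :=
  hL.clm_apply (seg_continuous d r x hx).continuousOn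

lemma seg_sub (d : ℕ) (r : ℝ) (x y : ℝ → Rd d) (hx : Continuous x) (hy : Continuous y)
    (t : ℝ) : seg d r (fun τ => x τ - y τ) (hx.sub hy) t = seg d r x hx t - seg d r y hy t := by
  apply ContinuousMap.ext; intro θ; rfl

lemma seg_point_eq (d : ℕ) (r : ℝ) (x y : ℝ → Rd d) (hx : Continuous x) (hy : Continuous y)
    (s : ℝ) (h : seg d r x hx s = seg d r y hy s) (τ : ℝ) (h1 : s - r ≤ τ) (h2 : τ ≤ s) :
    x τ = y τ := by
  have h2 : x (s + (τ - s)) = y (s + (τ - s)) :=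
    ContinuousMap.congr_fun h ⟨τ - s, ⟨by linarith, by linarith⟩⟩
  simpa using h2

lemma uniq (d : ℕ) (r : ℝ) (hr : 0 ≤ r) (L : ℝ → (Ph d r →L[ℝ] Rd d))
    (hL : ContinuousOn L (Set.Ici 0)) (s : ℝ) (hs : 0 ≤ s)
    (x y : ℝ → Rd d) (hx : Continuous x) (hy : Continuous y)
    (hsx : IsSol d r L s x hx) (hsy : IsSol d r L s y hy)
    (h0 : seg d r x hx s = seg d r y hy s) :
    ∀ τ, s - r ≤ τ → x τ = y τ := by
  set u : ℝ → Rd d := fun τ => x τ - y τ with hu_def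
  have hu : Continuous u := hx.sub hy
  have base : ∀ τ ∈ Icc (s - r) s, u τ = 0 := by
    intro τ hτ
    have := seg_point_eq d r x y hx hy s h0 τ hτ.1 hτ.2
    simp [hu_def, this]
  -- derivative of u
  have hdu : ∀ σ, s ≤ σ →
      HasDerivWithinAt u (L σ (seg d r u hu σ)) (Set.Ici s) σ := by
    intro σ hσ
    have := (hsx σ hσ).sub (hsy σ hσ)
    have heq : L σ (seg d r x hx σ) - L σ (seg d r y hy σ) = L σ (seg d r u hu σ) := by
      rw [← map_sub, ← seg_sub]
    rwa [heq] at this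
  have hg : ContinuousOn (fun σ => L σ (seg d r u hu σ)) (Set.Ici 0) :=
    segL_continuousOn d r L hL u hu
  -- main claim on a compact interval
  have main : ∀ b, s ≤ b → ∀ τ ∈ Icc (s - r) b, u τ = 0 := by
    intro b hb
    obtain ⟨K, hK⟩ := (isCompact_Icc (a := s) (b := b)).exists_bound_of_continuousOn (f := L)
      (hL.mono (fun σ (hσ : σ ∈ Icc s b) => le_trans hs hσ.1))
    have hK0 : 0 ≤ K := le_trans (norm_nonneg (L s)) (hK s ⟨le_refl s, hb⟩)
    set h : ℝ := 1 / (2 * (K + 1)) with hh_def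
    have hh : 0 < h := by positivity
    have hKh : K * h ≤ 1 / 2 := by
      rw [hh_def, mul_one_div, div_le_div_iff₀ (by positivity) (by norm_num : (0:ℝ) < 2)]
      nlinarith
    -- the step
    have step : ∀ T, s ≤ T → T ≤ b → (∀ τ ∈ Icc (s - r) T, u τ = 0) →
        ∀ τ ∈ Icc (s - r) (min (T + h) b), u τ = 0 := by
      intro T hsT hTb hP
      set T' := min (T + h) b with hT'
      have hTT' : T ≤ T' := le_min (by linarith) hTb
      intro τ hτ
      rcases le_or_gt τ T with hcase | hcase
      · exact hP τ ⟨hτ.1, hcase⟩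
      -- maximizer on [T, T']
      obtain ⟨σs, hσs, hmax⟩ := (isCompact_Icc (a := T) (b := T')).exists_isMaxOn
        (nonempty_Icc.2 hTT') (continuous_norm.comp hu).continuousOn
      set ρ := ‖u σs‖ with hρ
      have hρ0 : 0 ≤ ρ := norm_nonneg _
      -- seg norm bound on [T, T']
      have hsegbound : ∀ σ ∈ Icc T T', ‖seg d r u hu σ‖ ≤ ρ := by
        intro σ hσ
        apply seg_norm_le d r u hu σ ρ hρ0
        intro θ hθ
        rcases le_or_gt θ T with h1 | h1
        · have : u θ = 0 := hP θ ⟨by linarith [hθ.1, hσ.1], h1⟩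
          simp [this, hρ0]
        · exact hmax ⟨h1.le, le_trans hθ.2 hσ.2⟩
      -- FTC bound for each point of [T, T']
      have hpt : ∀ σ ∈ Icc T T', ‖u σ‖ ≤ K * ρ * (σ - T) := by
        intro σ hσ
        have hint : ∫ τ in T..σ, L τ (seg d r u hu τ) = u σ - u T := by
          apply intervalIntegral.integral_eq_sub_of_hasDeriv_right_of_le hσ.1
          · exact hu.continuousOn
          · intro τ' hτ'
            exact (hdu τ' (le_trans hsT hτ'.1.le)).mono
              (fun z hz => le_trans (le_trans hsT hτ'.1.le) hz.le)
          · apply ContinuousOn.intervalIntegrable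
            apply hg.mono
            intro z hz
            exact le_trans (le_trans hs (le_min hsT (le_trans hsT hσ.1))) hz.1
        have huT : u T = 0 := hP T ⟨by linarith, le_refl T⟩
        have hbound : ‖∫ τ in T..σ, L τ (seg d r u hu τ)‖ ≤ K * ρ * |σ - T| := by
          apply intervalIntegral.norm_integral_le_of_norm_le_const
          intro z hz
          rw [uIoc_of_le hσ.1] at hz
          have hz1 : z ∈ Icc T T' := ⟨hz.1.le, le_trans hz.2 hσ.2⟩
          calc ‖L z (seg d r u hu z)‖ ≤ ‖L z‖ * ‖seg d r u hu z‖ :=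
                ContinuousLinearMap.le_opNorm _ _
          _ ≤ K * ρ := by
                apply mul_le_mul (hK z ⟨by linarith [hz.1], le_trans hz1.2 (min_le_right _ _)⟩)
                  (hsegbound z hz1) (norm_nonneg _) hK0
        rw [hint, huT, sub_zero] at hbound
        rwa [abs_of_nonneg (by linarith [hσ.1])] at hbound
      -- conclude ρ = 0
      have hρle : ρ ≤ K * ρ * h := by
        have := hpt σs hσs
        have hσsT : σs - T ≤ h := by
          have := hσs.2
          have : σs ≤ T + h := le_trans this (min_le_left _ _)
          linarith
        calc ρ ≤ K * ρ * (σs - T) := this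
        _ ≤ K * ρ * h := by
            apply mul_le_mul_of_nonneg_left hσsT (by positivity)
      have hρ_zero : ρ ≤ 0 := by nlinarith
      have : ‖u τ‖ ≤ ρ := hmax ⟨hcase.le, hτ.2⟩
      have : ‖u τ‖ ≤ 0 := le_trans this hρ_zero
      simpa using le_antisymm this (norm_nonneg _)
    -- induction
    have ind : ∀ n : ℕ, ∀ τ ∈ Icc (s - r) (min (s + n * h) b), u τ = 0 := by
      intro n
      induction n with
      | zero =>
        intro τ hτ
        apply base τ
        refine ⟨hτ.1, ?_⟩
        have := hτ.2
        simp only [Nat.cast_zero, zero_mul, add_zero] at this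
        exact le_trans this (min_le_left _ _)
      | succ n ih =>
        set T := min (s + n * h) b with hTdef
        have hsT : s ≤ T := le_min (by nlinarith [hh.le, Nat.cast_nonneg (α := ℝ) n]) hb
        have hTb : T ≤ b := min_le_right _ _
        have hstep := step T hsT hTb (fun τ hτ => ih τ hτ)
        intro τ hτ
        apply hstep τ
        refine ⟨hτ.1, le_trans hτ.2 ?_⟩
        apply le_min _ (min_le_right _ _)
        have h1 : min (s + (n+1 : ℕ) * h) b ≤ s + (n+1 : ℕ) * h := min_le_left _ _
        have h2 : min (s + (n+1 : ℕ) * h) b ≤ b := min_le_right _ _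
        rcases le_total (s + n * h) b with hc | hc
        · rw [hTdef, min_eq_left hc]
          push_cast at h1 ⊢
          linarith
        · rw [hTdef, min_eq_right hc]
          linarith
    intro τ hτ
    obtain ⟨n, hn⟩ := exists_nat_ge ((b - s) / h)
    have hbn : b ≤ s + n * h := by
      rw [div_le_iff₀ hh] at hn
      linarith
    exact ind n τ ⟨hτ.1, le_trans hτ.2 (le_min hbn (le_refl b))⟩
  intro τ hτ
  have : u τ = 0 := by
    rcases le_total τ s with hc | hc
    · exact base τ ⟨hτ, hc⟩
    · exact main τ hc τ ⟨hτ, le_refl τ⟩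
  have := this
  rw [hu_def] at this
  exact sub_eq_zero.mp this


/-- If Eq. x'(t) = L(t)x_t is shadowable, then C = T(t,s)C + 𝒮(t) for all
t ≥ s ≥ 0. -/
theorem stmt4 (d : ℕ) (r : ℝ) (hr : 0 ≤ r)
    (L : ℝ → (Ph d r →L[ℝ] Rd d)) (hL : ContinuousOn L (Set.Ici 0))
    (T : ℝ → ℝ → (Ph d r →L[ℝ] Ph d r))
    (hT : IsSolOp d r L T) (hcoc : Cocycle d r T)
    (hsh : Shadowable d r L) :
    ∀ t s, 0 ≤ s → s ≤ t → ∀ φ : Ph d r,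
      ∃ φ₁ φ₂ : Ph d r, φ₂ ∈ stableSub d r T t ∧ φ = T t s φ₁ + φ₂ := by
  intro t s hs hst φ
  obtain ⟨δ, hδ, hshad⟩ := hsh 1 one_pos
  have ht0 : 0 ≤ t := le_trans hs hst
  obtain ⟨z, hz, hzsol, hzseg, hzT⟩ := hT t ht0 φ
  -- smooth cutoff
  set η : ℝ → ℝ := fun τ => Real.smoothTransition (τ - (t + 1)) with hη_def
  have hηc : ContDiff ℝ 1 η :=
    Real.smoothTransition.contDiff.comp (contDiff_id.sub contDiff_const)
  have hη0 : ∀ τ, τ ≤ t + 1 → η τ = 0 := fun τ h =>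
    Real.smoothTransition.zero_of_nonpos (by linarith)
  have hη1 : ∀ τ, t + 2 ≤ τ → η τ = 1 := fun τ h =>
    Real.smoothTransition.one_of_one_le (by linarith)
  have hηd0 : ∀ τ, τ < t + 1 → deriv η τ = 0 := by
    intro τ h
    have hev : η =ᶠ[nhds τ] fun _ => (0:ℝ) :=
      Filter.eventuallyEq_of_mem (Iio_mem_nhds h) (fun ζ hζ => hη0 ζ (le_of_lt hζ))
    rw [hev.deriv_eq]; exact deriv_const τ 0
  have hηd1 : ∀ τ, t + 2 < τ → deriv η τ = 0 := by
    intro τ h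
    have hev : η =ᶠ[nhds τ] fun _ => (1:ℝ) :=
      Filter.eventuallyEq_of_mem (Ioi_mem_nhds h) (fun ζ hζ => hη1 ζ (le_of_lt hζ))
    rw [hev.deriv_eq]; exact deriv_const τ 1
  have hηdc : Continuous (deriv η) := hηc.continuous_deriv le_rfl
  -- the bridged function y and its derivative yd
  set y : ℝ → Rd d := fun τ => η τ • z τ with hy_def
  have hyc : Continuous y := hηc.continuous.smul hz
  set yd : ℝ → Rd d := fun τ => deriv η τ • z τ + η τ • L τ (seg d r z hz τ) with hyd_def
  have hydc : ContinuousOn yd (Set.Ici 0) :=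
    ((hηdc.smul hz).continuousOn).add
      (hηc.continuous.continuousOn.smul (segL_continuousOn d r L hL z hz))
  have hyd' : ∀ τ, 0 ≤ τ → HasDerivWithinAt y (yd τ) (Set.Ici 0) τ := by
    intro τ hτ
    rcases lt_or_ge τ (t + 1) with hcase | hcase
    · have hev : y =ᶠ[nhds τ] fun _ => (0 : Rd d) :=
        Filter.eventuallyEq_of_mem (Iio_mem_nhds hcase)
          (fun ζ hζ => by simp [hy_def, hη0 ζ (le_of_lt hζ)])
      have hd : HasDerivAt y 0 τ :=
        (hasDerivAt_const τ (0 : Rd d)).congr_of_eventuallyEq hev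
      have hyd0 : yd τ = 0 := by
        simp [hyd_def, hηd0 τ hcase, hη0 τ hcase.le]
      rw [hyd0]; exact hd.hasDerivWithinAt
    · have hτt : t < τ := by linarith
      have hz' : HasDerivAt z (L τ (seg d r z hz τ)) τ :=
        (hzsol τ hτt.le).hasDerivAt (Ici_mem_nhds hτt)
      have hη' : HasDerivAt η (deriv η τ) τ :=
        ((hηc.differentiable one_ne_zero) τ).hasDerivAt
      have hd : HasDerivWithinAt y (η τ • L τ (seg d r z hz τ) + deriv η τ • z τ) (Set.Ici 0) τ :=
        (hη'.smul hz').hasDerivWithinAt (s := Set.Ici 0)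
      convert hd using 1
      exact add_comm _ _
  -- defect of y
  set u : ℝ := t + 3 + r with hu_def
  have hu0 : 0 ≤ u := by linarith
  have hsegyz : ∀ τ, u ≤ τ → seg d r y hyc τ = seg d r z hz τ := by
    intro τ hτ
    apply seg_eq_of_eqOn
    intro θ hθ
    have : η θ = 1 := hη1 θ (by linarith [hθ.1])
    simp [hy_def, this]
  have hdef_far : ∀ τ, u ≤ τ → yd τ - L τ (seg d r y hyc τ) = 0 := by
    intro τ hτ
    rw [hsegyz τ hτ]
    have h1 : deriv η τ = 0 := hηd1 τ (by linarith)
    have h2 : η τ = 1 := hη1 τ (by linarith)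
    simp [hyd_def, h1, h2]
  obtain ⟨B, hB⟩ := (isCompact_Icc (a := 0) (b := u)).exists_bound_of_continuousOn
    (f := fun τ => yd τ - L τ (seg d r y hyc τ))
    ((hydc.sub (segL_continuousOn d r L hL y hyc)).mono (fun ζ hζ => hζ.1))
  have hB0 : 0 ≤ B := le_trans (norm_nonneg _) (hB 0 ⟨le_refl 0, hu0⟩)
  have hdef : ∀ τ, 0 ≤ τ → ‖yd τ - L τ (seg d r y hyc τ)‖ ≤ B := by
    intro τ hτ
    rcases le_total τ u with hc | hc
    · exact hB τ ⟨hτ, hc⟩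
    · rw [hdef_far τ hc]; simpa using hB0
  -- scaled pseudosolution
  set c : ℝ := δ / (B + 1) with hc_def
  have hc : 0 < c := by positivity
  set Y : ℝ → Rd d := fun τ => c • y τ with hY_def
  have hYc : Continuous Y := hyc.const_smul c
  have hsegY : ∀ τ, seg d r Y hYc τ = c • seg d r y hyc τ := by
    intro τ; apply ContinuousMap.ext; intro θ; rfl
  have hshadres := hshad Y (fun τ => c • yd τ) hYc (hydc.const_smul c)
    (fun τ hτ => (hyd' τ hτ).const_smul c)
    (by
      intro τ hτ
      rw [hsegY τ, map_smul, ← smul_sub, norm_smul, Real.norm_of_nonneg hc.le]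
      calc c * ‖yd τ - L τ (seg d r y hyc τ)‖ ≤ c * B :=
            mul_le_mul_of_nonneg_left (hdef τ hτ) hc.le
      _ ≤ δ := by
            rw [hc_def, div_mul_eq_mul_div, div_le_iff₀ (by positivity)]
            nlinarith)
  obtain ⟨X, hX, hXsol, hXclose⟩ := hshadres
  -- X is a T-orbit
  obtain ⟨w, hw, hwsol, hwseg, hwT⟩ := hT 0 le_rfl (seg d r X hX 0)
  have hXw : ∀ τ, (0:ℝ) - r ≤ τ → X τ = w τ :=
    uniq d r hr L hL 0 le_rfl X w hX hw hXsol hwsol hwseg.symm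
  have hXT : ∀ τ, 0 ≤ τ → seg d r X hX τ = T τ 0 (seg d r X hX 0) := by
    intro τ hτ
    rw [← hwT τ hτ]
    apply seg_eq_of_eqOn
    intro θ hθ
    exact hXw θ (by linarith [hθ.1])
  -- the decomposition
  set φ₁ : Ph d r := c⁻¹ • (T s 0) (seg d r X hX 0) with hφ₁_def
  refine ⟨φ₁, φ - T t s φ₁, ?_, by abel⟩
  -- key identity
  have hkey : ∀ τ, t ≤ τ →
      T τ t (φ - T t s φ₁) = seg d r z hz τ - c⁻¹ • seg d r X hX τ := by
    intro τ hτ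
    have hsτ : s ≤ τ := le_trans hst hτ
    have h1 : (T τ t) ((T t s) φ₁) = (T τ s) φ₁ := by
      rw [hcoc.2 τ t s hs hst hτ]; rfl
    have h2 : (T τ s) ((T s 0) (seg d r X hX 0)) = T τ 0 (seg d r X hX 0) := by
      rw [hcoc.2 τ s 0 le_rfl hs hsτ]; rfl
    rw [map_sub, h1, hφ₁_def, map_smul, h2, ← hXT τ (le_trans ht0 hτ), ← hzT τ hτ]
  -- bound on the compact part
  obtain ⟨M₁, hM₁⟩ := (isCompact_Icc (a := t) (b := u)).exists_bound_of_continuousOn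
    (f := fun τ => seg d r z hz τ - c⁻¹ • seg d r X hX τ)
    (((seg_continuous d r z hz).sub ((seg_continuous d r X hX).const_smul c⁻¹)).continuousOn)
  refine ⟨max M₁ c⁻¹, ?_⟩
  intro τ hτ
  rw [hkey τ hτ]
  rcases le_total τ u with hc' | hc'
  · exact le_trans (hM₁ τ ⟨hτ, hc'⟩) (le_max_left _ _)
  · have hτ0 : 0 ≤ τ := le_trans hu0 hc'
    have hfactor : seg d r z hz τ - c⁻¹ • seg d r X hX τ
        = c⁻¹ • (seg d r Y hYc τ - seg d r X hX τ) := by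
      rw [hsegY τ, ← hsegyz τ hc', smul_sub, smul_smul, inv_mul_cancel₀ hc.ne', one_smul]
    rw [hfactor, @norm_smul ℝ (Ph d r) _ _ _ _ c⁻¹ _,
      Real.norm_of_nonneg (inv_nonneg.2 hc.le)]
    calc c⁻¹ * ‖seg d r Y hYc τ - seg d r X hX τ‖ ≤ c⁻¹ * 1 := by
          apply mul_le_mul_of_nonneg_left _ (inv_nonneg.2 hc.le)
          rw [norm_sub_rev]
          exact hXclose τ hτ0
    _ ≤ max M₁ c⁻¹ := by rw [mul_one]; exact le_max_right _ _


end
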